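/- arXiv:1911.03210 — 3 statements merged into one kernel-verified Lean document; each statement's English description precedes it below -/
import Mathlib

section
/- Let T≥1, N≥1, x∈ℝⁿ, H∈ℝ^{p×(T−1)}, and let u∈U^N(x,H) be an admissible control sequence. Then, with k_{T,N} := ⌈N/T⌉·T − N, the componentwise inequality Σ_{k=0}^{N−1} h(x_u(k,x),u(k)) ≤ −Σ_{i=1}^{k_{T,N}} H_{T−i} holds (the right-hand sum being 0 if k_{T,N}=0). -/
open Finset Filter
open scoped Classical

noncomputable section

namespace EMPC

abbrev Vec (n : ℕ) : Type := EuclideanSpace ℝ (Fin n)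

variable {n m p : ℕ}

/-- Trajectory of the discrete-time system `x(k+1) = f(x(k), u(k))`. -/
def traj (f : Vec n → Vec m → Vec n) (x : Vec n) (u : ℕ → Vec m) : ℕ → Vec n
  | 0 => x
  | k + 1 => f (traj f x u k) (u k)

/-- Open-loop cost `J_N(x,u)`. -/
def cost (f : Vec n → Vec m → Vec n) (ℓ : Vec n → Vec m → ℝ) (x : Vec n)
    (u : ℕ → Vec m) (N : ℕ) : ℝ :=
  ∑ k ∈ Finset.range N, ℓ (traj f x u k) (u k)

/-- Admissibility `u ∈ U^N(x,H)` for the transient average constrained problem. -/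
def Admissible (f : Vec n → Vec m → Vec n) (h : Vec n → Vec m → Vec p)
    (Z : Set (Vec n × Vec m)) (T N : ℕ) (x : Vec n) (H : ℕ → Vec p)
    (u : ℕ → Vec m) : Prop :=
  (∀ k < N, (traj f x u k, u k) ∈ Z) ∧
  (∀ j ∈ Finset.Icc 1 (T - 1), ∀ i : Fin p,
    (∑ l ∈ Finset.Icc j (T - 1), H l i)
      + ∑ k ∈ Finset.range j, h (traj f x u k) (u k) i ≤ 0) ∧
  (∀ s : ℕ, s + T ≤ N → ∀ i : Fin p,
    ∑ k ∈ Finset.Ico s (s + T), h (traj f x u k) (u k) i ≤ 0)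

/-- Class `K∞` comparison functions. -/
def KInf (α : ℝ → ℝ) : Prop :=
  ContinuousOn α (Set.Ici 0) ∧ StrictMonoOn α (Set.Ici 0) ∧ α 0 = 0 ∧
    Tendsto α atTop atTop

/-- Class `L_ℕ`: decreasing functions on ℕ with limit 0. -/
def LN (δ : ℕ → ℝ) : Prop :=
  Antitone δ ∧ (∀ k, 0 ≤ δ k) ∧ Tendsto δ atTop (nhds 0)

/-- Class `KLS`. -/
def KLS (β : ℝ → ℕ → ℝ) : Prop :=
  (∀ k : ℕ, ContinuousOn (fun r => β r k) (Set.Ici 0) ∧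
    StrictMonoOn (fun r => β r k) (Set.Ici 0) ∧ β 0 k = 0) ∧
  (∀ r : ℝ, 0 ≤ r → LN (fun k => β r k)) ∧
  (∀ r : ℝ, 0 ≤ r → Summable (fun k => β r k)) ∧
  (ContinuousOn (fun r => ∑' k, β r k) (Set.Ici 0) ∧
    StrictMonoOn (fun r => ∑' k, β r k) (Set.Ici 0) ∧ (∑' k, β 0 k) = 0)

/-- Class `KL`. -/
def KLcl (β : ℝ → ℝ → ℝ) : Prop :=
  ContinuousOn (fun q : ℝ × ℝ => β q.1 q.2) (Set.Ici 0 ×ˢ Set.Ici 0) ∧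
  (∀ s : ℝ, 0 ≤ s → StrictMonoOn (fun r => β r s) (Set.Ici 0) ∧ β 0 s = 0) ∧
  (∀ r : ℝ, 0 ≤ r → AntitoneOn (fun s => β r s) (Set.Ici 0) ∧
    Tendsto (fun s => β r s) atTop (nhds 0)) ∧
  (∀ r s : ℝ, 0 ≤ r → 0 ≤ s → 0 ≤ β r s)

/-- ℓ¹-norm of a vector. -/
def l1 (v : Vec p) : ℝ := ∑ i, |v i|

/-- `Ĥ_k = Σ_i max{H_{ik}, 0}`. -/
def hatCol (H : ℕ → Vec p) (k : ℕ) : ℝ := ∑ i, max (H k i) 0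

/-- Norm-like measure `⟨H⟩ = max_{k ∈ {1,…,T-1}} Ĥ_k`. -/
def measH (T : ℕ) (H : ℕ → Vec p) : ℝ := ⨆ k ∈ Finset.Icc 1 (T - 1), hatCol H k

/-- `‖H‖₁ = max_{k ∈ {1,…,T-1}} ‖H_k‖₁`. -/
def norm1H (T : ℕ) (H : ℕ → Vec p) : ℝ := ⨆ k ∈ Finset.Icc 1 (T - 1), l1 (H k)

/-- The set `𝕳` of feasible stored outputs. -/
def HSet (h : Vec n → Vec m → Vec p) (Z : Set (Vec n × Vec m)) (T : ℕ) :
    Set (ℕ → Vec p) :=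
  {H | ∀ k ∈ Finset.Icc 1 (T - 1), ∀ i : Fin p,
    sInf ((fun z : Vec n × Vec m => h z.1 z.2 i) '' Z) ≤ H k i ∧
    H k i ≤ sSup ((fun z : Vec n × Vec m => h z.1 z.2 i) '' Z)}

/-- Value function `J*_N(x,H)`. -/
def Jstar (f : Vec n → Vec m → Vec n) (ℓ : Vec n → Vec m → ℝ)
    (h : Vec n → Vec m → Vec p) (Z : Set (Vec n × Vec m)) (T N : ℕ)
    (x : Vec n) (H : ℕ → Vec p) : ℝ :=
  sInf ((fun u => cost f ℓ x u N) '' {u | Admissible f h Z T N x H u})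

/-- Rotated stage cost `ℓ̃`. -/
def rot (f : Vec n → Vec m → Vec n) (ℓ : Vec n → Vec m → ℝ)
    (h : Vec n → Vec m → Vec p) (ℓs : ℝ) (lam : Vec n → ℝ) (lb : Vec p)
    (x : Vec n) (u : Vec m) : ℝ :=
  ℓ x u - ℓs + lam x - lam (f x u) + ∑ i, lb i * h x u i

/-- Rotated open-loop cost. -/
def rcost (f : Vec n → Vec m → Vec n) (ℓ : Vec n → Vec m → ℝ)
    (h : Vec n → Vec m → Vec p) (ℓs : ℝ) (lam : Vec n → ℝ) (lb : Vec p)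
    (x : Vec n) (u : ℕ → Vec m) (N : ℕ) : ℝ :=
  ∑ k ∈ Finset.range N, rot f ℓ h ℓs lam lb (traj f x u k) (u k)

/-- Rotated value function `J̃*_N(x,H)`. -/
def Jtstar (f : Vec n → Vec m → Vec n) (ℓ : Vec n → Vec m → ℝ)
    (h : Vec n → Vec m → Vec p) (Z : Set (Vec n × Vec m)) (T : ℕ)
    (ℓs : ℝ) (lam : Vec n → ℝ) (lb : Vec p) (N : ℕ)
    (x : Vec n) (H : ℕ → Vec p) : ℝ :=
  sInf ((fun u => rcost f ℓ h ℓs lam lb x u N) '' {u | Admissible f h Z T N x H u})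

/-- `k_{T,N} = ⌈N/T⌉·T − N`. -/
def kTN (T N : ℕ) : ℕ := ((N + T - 1) / T) * T - N

/-- The stored-output matrix along a trajectory, starting at time `d`
(column `k ∈ {1,…,T-1}` is the auxiliary output at time `d + k - 1`). -/
def storedH (f : Vec n → Vec m → Vec n) (h : Vec n → Vec m → Vec p)
    (x : Vec n) (u : ℕ → Vec m) (d : ℕ) : ℕ → Vec p :=
  fun k => h (traj f x u (d + k - 1)) (u (d + k - 1))

/-- Local controllability (Assumption 4). -/
def LocCtrl (f : Vec n → Vec m → Vec n) (h : Vec n → Vec m → Vec p)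
    (Z : Set (Vec n × Vec m)) (T : ℕ) (xs : Vec n) (δc Eh : ℝ) (d : ℕ)
    (γx γu : ℝ → ℝ) : Prop :=
  ∀ (xc : Vec n) (Hc : ℕ → Vec p) (uc : ℕ → Vec m),
    Admissible f h Z T (d + T) xc Hc uc →
    measH T Hc ≤ Eh →
    (∀ k ≤ d + T, ‖traj f xc uc k - xs‖ ≤ δc) →
    ∀ (N₁ : ℕ) (x₁ : Vec n) (H₁ : ℕ → Vec p) (u₁ : ℕ → Vec m),
      d + T ≤ N₁ → x₁ ∈ Prod.fst '' Z → H₁ ∈ HSet h Z T →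
      Admissible f h Z T N₁ x₁ H₁ u₁ →
      measH T (fun k => storedH f h x₁ u₁ d k - storedH f h xc uc d k) ≤ Eh →
      ‖traj f x₁ u₁ d - xs‖ ≤ δc →
      ∀ (x₂ : Vec n) (H₂ : ℕ → Vec p),
        ‖x₂ - xs‖ ≤ δc → measH T (fun k => H₂ k - Hc k) ≤ Eh →
        ∃ u₂ : ℕ → Vec m,
          Admissible f h Z T d x₂ H₂ u₂ ∧
          traj f x₂ u₂ d = traj f x₁ u₁ d ∧
          Admissible f h Z T N₁ x₂ H₂ (fun k => if k < d then u₂ k else u₁ k) ∧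
          ∀ k ≤ d,
            ‖traj f x₂ u₂ k - traj f xc uc k‖ ≤
              γx (max (‖x₂ - xc‖ + measH T (fun j => H₂ j - Hc j))
                (‖traj f x₁ u₁ d - traj f xc uc d‖ +
                  measH T (fun j => storedH f h x₁ u₁ d j - storedH f h xc uc d j))) ∧
            ‖u₂ k - uc k‖ ≤
              γu (max (‖x₂ - xc‖ + measH T (fun j => H₂ j - Hc j))
                (‖traj f x₁ u₁ d - traj f xc uc d‖ +
                  measH T (fun j => storedH f h x₁ u₁ d j - storedH f h xc uc d j)))

/-- Shift dynamics of the stored outputs: `f_H(H, y) = [H_2, …, H_{T-1}, y]`. -/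
def shiftH (T : ℕ) (H : ℕ → Vec p) (y : Vec p) : ℕ → Vec p :=
  fun k => if k + 1 < T then H (k + 1) else if k + 1 = T then y else H k

/-- Closed-loop trajectory of the extended state `χ = (x, H)` under the MPC
feedback `μ_N(x,H) = u*_{N,x,H}(0)`. -/
def clTraj (f : Vec n → Vec m → Vec n) (h : Vec n → Vec m → Vec p)
    (ustar : ℕ → Vec n → (ℕ → Vec p) → ℕ → Vec m) (N T : ℕ)
    (χ : Vec n × (ℕ → Vec p)) : ℕ → Vec n × (ℕ → Vec p)
  | 0 => χ
  | k + 1 =>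
    (f (clTraj f h ustar N T χ k).1
        (ustar N (clTraj f h ustar N T χ k).1 (clTraj f h ustar N T χ k).2 0),
      shiftH T (clTraj f h ustar N T χ k).2
        (h (clTraj f h ustar N T χ k).1
          (ustar N (clTraj f h ustar N T χ k).1 (clTraj f h ustar N T χ k).2 0)))

theorem bound_by_past_outputs (n m p T N : ℕ) (hT : 1 ≤ T) (hN : 1 ≤ N)
    (f : Vec n → Vec m → Vec n) (h : Vec n → Vec m → Vec p)
    (Z : Set (Vec n × Vec m)) (x : Vec n) (H : ℕ → Vec p) (u : ℕ → Vec m)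
    (hu : Admissible f h Z T N x H u) :
    ∀ i : Fin p,
      (∑ k ∈ Finset.range N, h (traj f x u k) (u k) i) ≤
        -(∑ j ∈ Finset.Icc 1 (kTN T N), H (T - j) i) := by
  intro i
  obtain ⟨hZ, hpast, hblock⟩ := hu
  obtain ⟨M, hM⟩ : ∃ M, (N + T - 1) / T = M := ⟨_, rfl⟩
  have hdm := Nat.div_add_mod (N + T - 1) T
  rw [hM] at hdm
  have hmod : (N + T - 1) % T < T := Nat.mod_lt _ (by omega)
  have hcomm : M * T = T * M := Nat.mul_comm M T
  have h1 : N ≤ T * M := by omega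
  have h2 : T * M < N + T := by omega
  have hblocks : ∀ (c a : ℕ), a + c * T ≤ N →
      ∑ k ∈ Finset.Ico a (a + c * T), h (traj f x u k) (u k) i ≤ 0 := by
    intro c
    induction c with
    | zero => intro a _; simp
    | succ c ih =>
      intro a ha
      have hct : a + (c + 1) * T = (a + T) + c * T := by ring
      rw [hct] at ha ⊢
      rw [← Finset.sum_Ico_consecutive _ (show a ≤ a + T by omega)
        (show a + T ≤ (a + T) + c * T by omega)]
      have hb := hblock a (by omega) i
      have hrest := ih (a + T) ha
      linarith
  have hkk : kTN T N = M * T - N := by rw [kTN, hM]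
  by_cases hk0 : T * M ≤ N
  · have hNeq : N = T * M := le_antisymm h1 hk0
    have hz : kTN T N = 0 := by omega
    rw [hz]
    simp only [Finset.Icc_eq_empty_of_lt (by norm_num : (1:ℕ) > 0),
      Finset.sum_empty, neg_zero]
    have hb := hblocks M 0 (by omega)
    have hre : Finset.range N = Finset.Ico 0 (0 + M * T) := by
      rw [Finset.range_eq_Ico]; congr 1; omega
    rw [hre]
    exact hb
  · push_neg at hk0
    obtain ⟨kk, hkkdef⟩ : ∃ kk, T * M - N = kk := ⟨_, rfl⟩
    have hkk1 : 1 ≤ kk := by omega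
    have hkkT : kk ≤ T - 1 := by omega
    obtain ⟨jj, hjj⟩ : ∃ jj, T - kk = jj := ⟨_, rfl⟩
    have hM1 : 1 ≤ M := by
      rcases Nat.eq_zero_or_pos M with h0 | h0
      · subst h0; simp at hk0
      · exact h0
    obtain ⟨M', rfl⟩ : ∃ M', M = M' + 1 := ⟨M - 1, by omega⟩
    have hmul : T * (M' + 1) = T * M' + T := by ring
    have hmul2 : M' * T = T * M' := Nat.mul_comm M' T
    have hNsplit : N = jj + M' * T := by omega
    rw [hkk, show (M' + 1) * T - N = kk by omega]
    rw [Finset.range_eq_Ico,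
      ← Finset.sum_Ico_consecutive _ (Nat.zero_le jj) (show jj ≤ N by omega)]
    have hp := hpast jj (by rw [Finset.mem_Icc]; omega) i
    have hb : ∑ k ∈ Finset.Ico jj N, h (traj f x u k) (u k) i ≤ 0 := by
      have hb' := hblocks M' jj (by omega)
      rw [show jj + M' * T = N by omega] at hb'
      exact hb'
    have hre : ∑ j ∈ Finset.Icc 1 kk, H (T - j) i
        = ∑ l ∈ Finset.Icc jj (T - 1), H l i := by
      apply Finset.sum_nbij' (fun j => T - j) (fun l => T - l)
      · intro a haa; rw [Finset.mem_Icc] at *; omega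
      · intro a haa; rw [Finset.mem_Icc] at *; omega
      · intro a haa; rw [Finset.mem_Icc] at haa; omega
      · intro a haa; rw [Finset.mem_Icc] at haa; omega
      · intro a haa; rfl
    rw [Finset.range_eq_Ico] at hp
    rw [hre]
    linarith


end EMPC
end
end

section
/- (Theorem 1, part II: turnpike over T consecutive time instants.) Let Assumptions 1–3 hold, let (x_s,u_s)∈Z be a steady-state (f(x_s,u_s)=x_s, h_s:=h(x_s,u_s)≤0 componentwise), and assume the value function infimum is attained by a unique minimizer for every horizon and every initial condition in X×𝕳. Then there exists σ_T∈L_ℕ such that for any (x,H)∈X×𝕳 with each column of H in h(Z):={h(x,u):(x,u)∈Z}, any N∈ℕ and any integers k′_l,k′_u with 0≤k′_l≤k′_u−T²−1 and k′_u≤N−1, there exists k_x∈{k′_l+T−1,…,k′_u} such that the optimal trajectory u*:=u*_{N,x,H} satisfies ‖(x_{u*}(k,x)−x_s, u*(k)−u_s)‖ ≤ ε and ‖h(x_{u*}(k,x),u*(k))−h_s‖ ≤ L_h·ε for all k∈{k_x−T+1,…,k_x}, where ε := σ_T(k′_u−k′_l−T²). -/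
open Finset Filter
open scoped Classical

noncomputable section

namespace EMPC

variable {n m p : ℕ}

lemma abs_coord_le_norm {p : ℕ} (v : Vec p) (i : Fin p) : |v i| ≤ ‖v‖ := by
  rw [EuclideanSpace.norm_eq]
  rw [show |v i| = Real.sqrt (|v i| ^ 2) from (Real.sqrt_sq (abs_nonneg _)).symm]
  apply Real.sqrt_le_sqrt
  have h := Finset.single_le_sum (f := fun j => ‖v j‖ ^ 2)
    (fun j _ => by positivity) (Finset.mem_univ i)
  simpa [Real.norm_eq_abs, sq_abs] using h

lemma hatCol_nonneg {p : ℕ} (H : ℕ → Vec p) (k : ℕ) : 0 ≤ hatCol H k :=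
  Finset.sum_nonneg fun _ _ => le_max_right _ _

lemma measH_le {p : ℕ} (T : ℕ) (H : ℕ → Vec p) {c : ℝ} (hc : 0 ≤ c)
    (hb : ∀ k ∈ Finset.Icc 1 (T - 1), hatCol H k ≤ c) : measH T H ≤ c :=
  Real.iSup_le (fun k => Real.iSup_le (fun hk => hb k hk) hc) hc

lemma measH_nonneg {p : ℕ} (T : ℕ) (H : ℕ → Vec p) : 0 ≤ measH T H := by
  rcases Finset.eq_empty_or_nonempty (Finset.Icc 1 (T - 1)) with he | ⟨k0, hk0⟩
  · have hcl : ∀ k : ℕ, (⨆ _ : k ∈ Finset.Icc 1 (T - 1), hatCol H k) = 0 := by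
      intro k
      haveI : IsEmpty (k ∈ Finset.Icc 1 (T - 1)) :=
        ⟨fun hmem => by rw [he] at hmem; exact absurd hmem (Finset.notMem_empty k)⟩
      exact Real.iSup_of_isEmpty _
    unfold measH
    simp only [hcl]
    rw [ciSup_const]
  · have hb : BddAbove (Set.range fun k => ⨆ _ : k ∈ Finset.Icc 1 (T - 1), hatCol H k) := by
      refine ⟨∑ j ∈ Finset.Icc 1 (T - 1), hatCol H j, ?_⟩
      rintro y ⟨k, rfl⟩
      exact Real.iSup_le
        (fun hk => Finset.single_le_sum (fun j _ => hatCol_nonneg H j) hk)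
        (Finset.sum_nonneg fun j _ => hatCol_nonneg H j)
    have h2 : hatCol H k0 = ⨆ _ : k0 ∈ Finset.Icc 1 (T - 1), hatCol H k0 :=
      (ciSup_pos (f := fun _ => hatCol H k0) hk0).symm
    calc (0:ℝ) ≤ hatCol H k0 := hatCol_nonneg H k0
      _ = _ := h2
      _ ≤ measH T H := le_ciSup hb k0

set_option maxHeartbeats 4000000 in
theorem turnpike_T_consecutive (n m p T : ℕ) (hT : 1 ≤ T)
    (f : Vec n → Vec m → Vec n) (ℓ : Vec n → Vec m → ℝ)
    (h : Vec n → Vec m → Vec p) (Z : Set (Vec n × Vec m)) (Lh : ℝ)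
    (xs : Vec n) (us : Vec m) (lam : Vec n → ℝ) (lb : Vec p) (ρ : ℝ → ℝ)
    (ustar : ℕ → Vec n → (ℕ → Vec p) → ℕ → Vec m)
    -- Assumption 1 (compactness and continuity)
    (hZ : IsCompact Z)
    (hfc : ∃ αf : ℝ → ℝ, KInf αf ∧ ∀ z₁ ∈ Z, ∀ z₂ ∈ Z,
      ‖f z₁.1 z₁.2 - f z₂.1 z₂.2‖ ≤ αf ‖(z₁.1 - z₂.1, z₁.2 - z₂.2)‖)
    (halc : ∃ αl : ℝ → ℝ, KInf αl ∧ ∀ z₁ ∈ Z, ∀ z₂ ∈ Z,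
      |ℓ z₁.1 z₁.2 - ℓ z₂.1 z₂.2| ≤ αl ‖(z₁.1 - z₂.1, z₁.2 - z₂.2)‖)
    (hLh : 0 < Lh)
    (hhL : ∀ z₁ ∈ Z, ∀ z₂ ∈ Z,
      ‖h z₁.1 z₁.2 - h z₂.1 z₂.2‖ ≤ Lh * ‖(z₁.1 - z₂.1, z₁.2 - z₂.2)‖)
    -- optimal steady-state
    (hzs : (xs, us) ∈ Z) (hfix : f xs us = xs) (hhs : ∀ i, h xs us i ≤ 0)
    -- Assumption 2 (strict dissipativity)
    (hρ : KInf ρ) (hlb : ∀ i, 0 ≤ lb i) (hlam0 : lam xs = 0)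
    (hlamc : ∃ αlam : ℝ → ℝ, KInf αlam ∧ ∀ x₁ ∈ Prod.fst '' Z, ∀ x₂ ∈ Prod.fst '' Z,
      |lam x₁ - lam x₂| ≤ αlam ‖x₁ - x₂‖)
    (hdiss : ∀ z ∈ Z, lam (f z.1 z.2) - lam z.1 ≤
      ℓ z.1 z.2 - ℓ xs us + (∑ i, lb i * h z.1 z.2 i) - ρ ‖(z.1 - xs, z.2 - us)‖)
    -- Assumption 3 (asymptotic controllability)
    (hac : ∃ β₁ β₂ : ℝ → ℕ → ℝ, KLS β₁ ∧ KLS β₂ ∧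
      ∀ x ∈ Prod.fst '' Z, ∀ H ∈ HSet h Z T, ∀ N : ℕ, ∃ u : ℕ → Vec m,
        Admissible f h Z T N x H u ∧ ∀ k < N,
          ℓ (traj f x u k) (u k) - ℓ xs us ≤
            β₁ ‖x - xs‖ k + β₂ (measH T (fun j => H j - h xs us)) k ∧
          rot f ℓ h (ℓ xs us) lam lb (traj f x u k) (u k) ≤
            β₁ ‖x - xs‖ k + β₂ (measH T (fun j => H j - h xs us)) k)
    -- the value function is attained by the unique minimizer `ustar`
    (hopt : ∀ (N : ℕ), ∀ x ∈ Prod.fst '' Z, ∀ H ∈ HSet h Z T,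
      Admissible f h Z T N x H (ustar N x H) ∧
      cost f ℓ x (ustar N x H) N = Jstar f ℓ h Z T N x H ∧
      ∀ u : ℕ → Vec m, Admissible f h Z T N x H u →
        cost f ℓ x u N = Jstar f ℓ h Z T N x H → ∀ k < N, u k = ustar N x H k)
    :
    ∃ σT : ℕ → ℝ, LN σT ∧
      ∀ (x : Vec n) (H : ℕ → Vec p), x ∈ Prod.fst '' Z → H ∈ HSet h Z T →
        (∀ k ∈ Finset.Icc 1 (T - 1), ∃ z ∈ Z, H k = h z.1 z.2) →
        ∀ (N kl ku : ℕ), kl + T ^ 2 + 1 ≤ ku → ku < N →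
          ∃ kx ∈ Finset.Icc (kl + T - 1) ku,
            ∀ k ∈ Finset.Icc (kx + 1 - T) kx,
              ‖(traj f x (ustar N x H) k - xs, ustar N x H k - us)‖ ≤
                σT (ku - kl - T ^ 2) ∧
              ‖h (traj f x (ustar N x H) k) (ustar N x H k) - h xs us‖ ≤
                Lh * σT (ku - kl - T ^ 2) := by
  classical
  obtain ⟨αl, hαl, hαlZ⟩ := halc
  obtain ⟨αlam, hαlam, hαlamZ⟩ := hlamc
  obtain ⟨β₁, β₂, hβ₁, hβ₂, hac'⟩ := hac
  obtain ⟨D₀, hD₀⟩ := hZ.isBounded.subset_closedBall (xs, us)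
  set D : ℝ := max D₀ 0 with hD
  have hD0 : (0:ℝ) ≤ D := le_max_right _ _
  have hDz : ∀ z ∈ Z, ‖(z.1 - xs, z.2 - us)‖ ≤ D := by
    intro z hz
    have h1 := hD₀ hz
    rw [Metric.mem_closedBall, dist_eq_norm] at h1
    have h2 : z - (xs, us) = (z.1 - xs, z.2 - us) := rfl
    rw [h2] at h1
    exact le_trans h1 (le_max_left _ _)
  have hXD : ∀ x' ∈ Prod.fst '' Z, ‖x' - xs‖ ≤ D := by
    rintro _ ⟨z, hz, rfl⟩
    exact le_trans (norm_fst_le (z.1 - xs, z.2 - us)) (hDz z hz)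
  set Bh : ℝ := ‖h xs us‖ + Lh * D with hBh
  have hBh0 : 0 ≤ Bh := by positivity
  set Rp : ℝ := (p:ℝ) * (Lh * D) with hRp
  have hRp0 : 0 ≤ Rp := by positivity
  set Slb : ℝ := ∑ i, lb i with hSlb
  have hSlb0 : 0 ≤ Slb := Finset.sum_nonneg fun i _ => hlb i
  have hmem0 : (0:ℝ) ∈ Set.Ici (0:ℝ) := Set.self_mem_Ici
  have hmemD : D ∈ Set.Ici (0:ℝ) := Set.mem_Ici.mpr hD0
  have hαlD0 : 0 ≤ αl D := by
    have := hαl.2.1.monotoneOn hmem0 hmemD hD0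
    rw [hαl.2.2.1] at this; exact this
  have hαlamD0 : 0 ≤ αlam D := by
    have := hαlam.2.1.monotoneOn hmem0 hmemD hD0
    rw [hαlam.2.2.1] at this; exact this
  have hγ₁D0 : 0 ≤ ∑' k, β₁ D k := by
    have := hβ₁.2.2.2.2.1.monotoneOn hmem0 hmemD hD0
    rw [hβ₁.2.2.2.2.2] at this; exact this
  have hγ₂R0 : 0 ≤ ∑' k, β₂ Rp k := by
    have := hβ₂.2.2.2.2.1.monotoneOn hmem0 (Set.mem_Ici.mpr hRp0) hRp0
    rw [hβ₂.2.2.2.2.2] at this; exact this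
  set C : ℝ := (∑' k, β₁ D k) + (∑' k, β₂ Rp k) + αl D + 2 * αlam D
      + Slb * (T * Bh) + 1 with hC
  have hC1 : 1 ≤ C := by
    have hTB : 0 ≤ Slb * (T * Bh) := by positivity
    rw [hC]; linarith
  have hTpos : (0:ℝ) < T := by exact_mod_cast hT
  have hCpos : 0 < C := by linarith
  have h3CTpos : (0:ℝ) < 3 * C * T := mul_pos (mul_pos (by norm_num) hCpos) hTpos
  clear_value D Bh Rp Slb C
  have hρmono := hρ.2.1.monotoneOn
  have hρ0 : ρ 0 = 0 := hρ.2.2.1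
  have hρsurj : ∀ s : ℕ, ∃ r, 0 ≤ r ∧ ρ r = 3 * C * T / ((s:ℝ) + 1) := by
    intro s
    have hcpos : 0 < 3 * C * T / ((s:ℝ) + 1) := div_pos h3CTpos (by positivity)
    obtain ⟨b, hb1, hb2⟩ :=
      ((hρ.2.2.2.eventually_ge_atTop (3 * C * T / ((s:ℝ) + 1))).and
        (eventually_ge_atTop (0:ℝ))).exists
    have hivt := intermediate_value_Icc hb2 (hρ.1.mono Set.Icc_subset_Ici_self)
    have hmem : (3 * C * T / ((s:ℝ) + 1)) ∈ Set.Icc (ρ 0) (ρ b) :=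
      ⟨by rw [hρ0]; exact hcpos.le, hb1⟩
    obtain ⟨r, hr, hr2⟩ := hivt hmem
    exact ⟨r, hr.1, hr2⟩
  choose σT hσ0 hσρ using hρsurj
  have hσlt : ∀ {a b : ℝ}, 0 ≤ a → 0 ≤ b → ρ a ≤ ρ b → a ≤ b := by
    intro a b ha hb hab
    by_contra hcon
    push_neg at hcon
    exact absurd hab
      (not_le.mpr (hρ.2.1 (Set.mem_Ici.mpr hb) (Set.mem_Ici.mpr ha) hcon))
  refine ⟨σT, ⟨?_, hσ0, ?_⟩, ?_⟩
  · -- Antitone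
    intro a b hab
    apply hσlt (hσ0 b) (hσ0 a)
    rw [hσρ a, hσρ b]
    apply div_le_div_of_nonneg_left h3CTpos.le (by positivity)
    have : (a:ℝ) ≤ b := by exact_mod_cast hab
    linarith
  · -- Tendsto to 0
    rw [Metric.tendsto_atTop]
    intro ε hε
    have hρε : 0 < ρ ε := by
      rw [← hρ0]
      exact hρ.2.1 hmem0 (Set.mem_Ici.mpr hε.le) hε
    refine ⟨⌈3 * C * T / ρ ε⌉₊, fun s hs => ?_⟩
    have h1 : 3 * C * T / ρ ε < (s:ℝ) + 1 := by
      have h2 : ((⌈3 * C * T / ρ ε⌉₊ : ℕ):ℝ) ≤ (s:ℝ) := by exact_mod_cast hs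
      have := Nat.le_ceil (3 * C * T / ρ ε)
      linarith
    have h2 : ρ (σT s) < ρ ε := by
      rw [hσρ s, div_lt_iff₀ (by positivity : (0:ℝ) < (s:ℝ) + 1)]
      have := (div_lt_iff₀ hρε).mp h1
      linarith
    have h3 : σT s < ε := by
      by_contra hcon
      push_neg at hcon
      exact absurd h2 (not_lt.mpr (hρmono (Set.mem_Ici.mpr hε.le)
        (Set.mem_Ici.mpr (hσ0 s)) hcon))
    rw [Real.dist_eq, sub_zero, abs_of_nonneg (hσ0 s)]
    exact h3
  · -- Main statement
    intro x H hx hH hHcol N kl ku hk1 hk2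
    obtain ⟨hadm, hcost, -⟩ := hopt N x hx H hH
    set u : ℕ → Vec m := ustar N x H with hu
    clear_value u
    have hz : ∀ k < N, (traj f x u k, u k) ∈ Z := hadm.1
    have hdk : ∀ k, k < N → ‖(traj f x u k - xs, u k - us)‖ ≤ D :=
      fun k hk => hDz (traj f x u k, u k) (hz k hk)
    -- step 1 : value bound
    have hJ : cost f ℓ x u N ≤ N * ℓ xs us + ((∑' k, β₁ D k) + (∑' k, β₂ Rp k)) := by
      obtain ⟨u', hu'adm, hu'b⟩ := hac' x hx H hH N
      have hr₁0 : (0:ℝ) ≤ ‖x - xs‖ := norm_nonneg _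
      have hr₁D : ‖x - xs‖ ≤ D := hXD x hx
      have hr₂0 : 0 ≤ measH T (fun j => H j - h xs us) := measH_nonneg _ _
      have hr₂R : measH T (fun j => H j - h xs us) ≤ Rp := by
        apply measH_le _ _ hRp0
        intro k hk
        obtain ⟨z, hzZ, hzk⟩ := hHcol k hk
        have hb : ∀ i : Fin p, max ((H k - h xs us) i) 0 ≤ Lh * D := by
          intro i
          have h1 : (H k - h xs us) i = h z.1 z.2 i - h xs us i := by
            rw [PiLp.sub_apply, hzk]
          have h2 : |h z.1 z.2 i - h xs us i| ≤ ‖h z.1 z.2 - h xs us‖ := by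
            have h2' := abs_coord_le_norm (h z.1 z.2 - h xs us) i
            rwa [PiLp.sub_apply] at h2'
          have h3 : ‖h z.1 z.2 - h xs us‖ ≤ Lh * D := by
            have h4 := hhL z hzZ (xs, us) hzs
            have h5 : Lh * ‖(z.1 - xs, z.2 - us)‖ ≤ Lh * D :=
              mul_le_mul_of_nonneg_left (hDz z hzZ) hLh.le
            exact le_trans h4 h5
          apply max_le _ (by positivity)
          rw [h1]
          exact le_trans (le_abs_self _) (le_trans h2 h3)
        calc hatCol (fun j => H j - h xs us) k
            = ∑ i, max ((H k - h xs us) i) 0 := rfl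
          _ ≤ ∑ _i : Fin p, (Lh * D) := Finset.sum_le_sum (fun i _ => hb i)
          _ = (p:ℝ) * (Lh * D) := by
              rw [Finset.sum_const, Finset.card_univ, Fintype.card_fin, nsmul_eq_mul]
          _ = Rp := hRp.symm
      have hterm : ∀ k ∈ Finset.range N,
          ℓ (traj f x u' k) (u' k) ≤ ℓ xs us +
            (β₁ ‖x - xs‖ k + β₂ (measH T (fun j => H j - h xs us)) k) := by
        intro k hk
        have h1 := (hu'b k (Finset.mem_range.mp hk)).1
        linarith
      have hsum1 : ∑ k ∈ Finset.range N, β₁ ‖x - xs‖ k ≤ ∑' k, β₁ D k :=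
        le_trans
          (Summable.sum_le_tsum _ (fun k _ => (hβ₁.2.1 _ hr₁0).2.1 k) (hβ₁.2.2.1 _ hr₁0))
          (hβ₁.2.2.2.2.1.monotoneOn (Set.mem_Ici.mpr hr₁0) hmemD hr₁D)
      have hsum2 : ∑ k ∈ Finset.range N, β₂ (measH T (fun j => H j - h xs us)) k
          ≤ ∑' k, β₂ Rp k :=
        le_trans
          (Summable.sum_le_tsum _ (fun k _ => (hβ₂.2.1 _ hr₂0).2.1 k) (hβ₂.2.2.1 _ hr₂0))
          (hβ₂.2.2.2.2.1.monotoneOn (Set.mem_Ici.mpr hr₂0) (Set.mem_Ici.mpr hRp0) hr₂R)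
      have hcost_le : cost f ℓ x u' N
          ≤ N * ℓ xs us + ((∑' k, β₁ D k) + (∑' k, β₂ Rp k)) := by
        have h0 : cost f ℓ x u' N ≤ ∑ k ∈ Finset.range N,
            (ℓ xs us + (β₁ ‖x - xs‖ k + β₂ (measH T (fun j => H j - h xs us)) k)) :=
          Finset.sum_le_sum hterm
        rw [Finset.sum_add_distrib, Finset.sum_add_distrib, Finset.sum_const,
          Finset.card_range, nsmul_eq_mul] at h0
        linarith
      have hbdd : BddBelow ((fun v => cost f ℓ x v N) ''
          {v | Admissible f h Z T N x H v}) := by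
        refine ⟨N * (ℓ xs us - αl D), ?_⟩
        rintro y ⟨v, hv, rfl⟩
        have hv' : Admissible f h Z T N x H v := hv
        have hterm2 : ∀ k ∈ Finset.range N,
            ℓ xs us - αl D ≤ ℓ (traj f x v k) (v k) := by
          intro k hk
          have hzk : (traj f x v k, v k) ∈ Z := hv'.1 k (Finset.mem_range.mp hk)
          have h1 := hαlZ (traj f x v k, v k) hzk (xs, us) hzs
          dsimp only at h1
          have h2 : αl ‖(traj f x v k - xs, v k - us)‖ ≤ αl D :=
            hαl.2.1.monotoneOn (Set.mem_Ici.mpr (norm_nonneg _)) hmemD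
              (hDz (traj f x v k, v k) hzk)
          have h3 := abs_le.mp h1
          linarith [h3.1, h3.2]
        calc (N:ℝ) * (ℓ xs us - αl D)
            = ∑ _k ∈ Finset.range N, (ℓ xs us - αl D) := by
              rw [Finset.sum_const, Finset.card_range, nsmul_eq_mul]
          _ ≤ cost f ℓ x v N := Finset.sum_le_sum hterm2
      have hle : Jstar f ℓ h Z T N x H ≤ cost f ℓ x u' N :=
        csInf_le hbdd ⟨u', hu'adm, rfl⟩
      rw [hcost]
      exact le_trans hle hcost_le
    -- step 2 : key rotated-cost bound
    set M := N - 1 with hM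
    clear_value M
    have hMN : M + 1 = N := by omega
    have key : ∑ k ∈ Finset.range M, ρ ‖(traj f x u k - xs, u k - us)‖ ≤ C - 1 := by
      have hstep : ∀ k, k < N → ρ ‖(traj f x u k - xs, u k - us)‖ ≤
          ℓ (traj f x u k) (u k) - ℓ xs us
            + (∑ i, lb i * h (traj f x u k) (u k) i)
            + (lam (traj f x u k) - lam (traj f x u (k+1))) := by
        intro k hk
        have hd := hdiss (traj f x u k, u k) (hz k hk)
        dsimp only at hd
        have htr : traj f x u (k+1) = f (traj f x u k) (u k) := rfl
        rw [← htr] at hd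
        linarith
      have h1 : ∑ k ∈ Finset.range M, ρ ‖(traj f x u k - xs, u k - us)‖ ≤
          ∑ k ∈ Finset.range M,
            (ℓ (traj f x u k) (u k) - ℓ xs us
              + (∑ i, lb i * h (traj f x u k) (u k) i)
              + (lam (traj f x u k) - lam (traj f x u (k+1)))) :=
        Finset.sum_le_sum (fun k hk => hstep k
          (by have := Finset.mem_range.mp hk; omega))
      have e1 : ∑ k ∈ Finset.range M, (lam (traj f x u k) - lam (traj f x u (k+1)))
          = lam x - lam (traj f x u M) := by
        have e := Finset.sum_range_sub' (fun k => lam (traj f x u k)) M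
        have e0 : traj f x u 0 = x := rfl
        rw [e0] at e
        exact e
      have h2 : ∑ k ∈ Finset.range M,
            (ℓ (traj f x u k) (u k) - ℓ xs us
              + (∑ i, lb i * h (traj f x u k) (u k) i)
              + (lam (traj f x u k) - lam (traj f x u (k+1))))
          = ((∑ k ∈ Finset.range M, ℓ (traj f x u k) (u k)) - M * ℓ xs us)
            + (∑ k ∈ Finset.range M, ∑ i, lb i * h (traj f x u k) (u k) i)
            + (lam x - lam (traj f x u M)) := by
        rw [Finset.sum_add_distrib, Finset.sum_add_distrib, Finset.sum_sub_distrib,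
          Finset.sum_const, Finset.card_range, nsmul_eq_mul, e1]
      have hlM : ℓ xs us - αl D ≤ ℓ (traj f x u M) (u M) := by
        have hzk : (traj f x u M, u M) ∈ Z := hz M (by omega)
        have h1' := hαlZ (traj f x u M, u M) hzk (xs, us) hzs
        dsimp only at h1'
        have h2' : αl ‖(traj f x u M - xs, u M - us)‖ ≤ αl D :=
          hαl.2.1.monotoneOn (Set.mem_Ici.mpr (norm_nonneg _)) hmemD
            (hdk M (by omega))
        have h3' := abs_le.mp h1'
        linarith [h3'.1]
      have hpiece1 : (∑ k ∈ Finset.range M, ℓ (traj f x u k) (u k)) - M * ℓ xs us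
          ≤ (∑' k, β₁ D k) + (∑' k, β₂ Rp k) + αl D := by
        have e : cost f ℓ x u N
            = (∑ k ∈ Finset.range M, ℓ (traj f x u k) (u k))
              + ℓ (traj f x u M) (u M) := by
          have e' : cost f ℓ x u N
              = ∑ k ∈ Finset.range N, ℓ (traj f x u k) (u k) := rfl
          rw [e', ← hMN, Finset.sum_range_succ]
        have hcast : (N:ℝ) = (M:ℝ) + 1 := by exact_mod_cast hMN.symm
        rw [hcast] at hJ
        linarith [hJ, hlM, e]
      have hpiece2 : ∑ k ∈ Finset.range M, ∑ i, lb i * h (traj f x u k) (u k) i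
          ≤ Slb * (T * Bh) := by
        rw [Finset.sum_comm]
        have hper : ∀ i : Fin p,
            ∑ k ∈ Finset.range M, h (traj f x u k) (u k) i ≤ T * Bh := by
          intro i
          have hwin : ∀ w : ℕ, w * T ≤ N →
              ∑ k ∈ Finset.range (w * T), h (traj f x u k) (u k) i ≤ 0 := by
            intro w
            induction w with
            | zero => intro _; simp
            | succ w ih =>
              intro hle
              have hexp : (w + 1) * T = w * T + T := Nat.succ_mul w T
              have hle' : w * T ≤ N := by omega
              have hwnd := hadm.2.2 (w * T) (by omega) i
              have hsplit :
                  ∑ k ∈ Finset.range (w * T), h (traj f x u k) (u k) i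
                    + ∑ k ∈ Finset.Ico (w * T) (w * T + T), h (traj f x u k) (u k) i
                  = ∑ k ∈ Finset.range ((w + 1) * T), h (traj f x u k) (u k) i := by
                rw [Finset.range_eq_Ico, hexp, Finset.range_eq_Ico]
                exact Finset.sum_Ico_consecutive _ (Nat.zero_le _) (Nat.le_add_right _ _)
              have hih := ih hle'
              rw [← hsplit]
              linarith
          have hq : (M / T) * T ≤ M := Nat.div_mul_le_self M T
          have hsplit2 :
              ∑ k ∈ Finset.range ((M / T) * T), h (traj f x u k) (u k) i
                + ∑ k ∈ Finset.Ico ((M / T) * T) M, h (traj f x u k) (u k) i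
              = ∑ k ∈ Finset.range M, h (traj f x u k) (u k) i := by
            rw [Finset.range_eq_Ico, Finset.range_eq_Ico]
            exact Finset.sum_Ico_consecutive _ (Nat.zero_le _) hq
          have hw := hwin (M / T) (by omega)
          have hbnd : ∀ k ∈ Finset.Ico ((M / T) * T) M,
              h (traj f x u k) (u k) i ≤ Bh := by
            intro k hk
            have hkM := (Finset.mem_Ico.mp hk).2
            have hkN : k < N := by omega
            have h2' : |h (traj f x u k) (u k) i| ≤ ‖h (traj f x u k) (u k)‖ :=
              abs_coord_le_norm _ i
            have h3' : ‖h (traj f x u k) (u k)‖ - ‖h xs us‖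
                ≤ ‖h (traj f x u k) (u k) - h xs us‖ := norm_sub_norm_le _ _
            have h4' := hhL (traj f x u k, u k) (hz k hkN) (xs, us) hzs
            dsimp only at h4'
            have h5' : Lh * ‖(traj f x u k - xs, u k - us)‖ ≤ Lh * D :=
              mul_le_mul_of_nonneg_left (hdk k hkN) hLh.le
            have h6' := le_abs_self (h (traj f x u k) (u k) i)
            rw [hBh]
            linarith
          have hrem : ∑ k ∈ Finset.Ico ((M / T) * T) M, h (traj f x u k) (u k) i
              ≤ (T:ℝ) * Bh := by
            have hcs := Finset.sum_le_card_nsmul (Finset.Ico ((M / T) * T) M) _ Bh hbnd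
            rw [Nat.card_Ico, nsmul_eq_mul] at hcs
            have hmt : M - (M / T) * T ≤ T := by
              have hdm : T * (M / T) + M % T = M := Nat.div_add_mod M T
              have hcomm : T * (M / T) = (M / T) * T := Nat.mul_comm _ _
              have hmd : M % T < T := Nat.mod_lt _ (by omega)
              omega
            have hmt' : ((M - (M / T) * T : ℕ) : ℝ) ≤ (T:ℝ) := by exact_mod_cast hmt
            calc ∑ k ∈ Finset.Ico ((M / T) * T) M, h (traj f x u k) (u k) i
                ≤ ((M - (M / T) * T : ℕ) : ℝ) * Bh := hcs
              _ ≤ (T:ℝ) * Bh := mul_le_mul_of_nonneg_right hmt' hBh0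
          rw [← hsplit2]
          linarith
        calc ∑ i, ∑ k ∈ Finset.range M, lb i * h (traj f x u k) (u k) i
            = ∑ i, lb i * ∑ k ∈ Finset.range M, h (traj f x u k) (u k) i := by
              refine Finset.sum_congr rfl fun i _ => ?_
              rw [Finset.mul_sum]
          _ ≤ ∑ i, lb i * (T * Bh) := Finset.sum_le_sum (fun i _ =>
              mul_le_mul_of_nonneg_left (hper i) (hlb i))
          _ = Slb * (T * Bh) := by rw [hSlb, Finset.sum_mul]
      have hpiece3 : lam x - lam (traj f x u M) ≤ 2 * αlam D := by
        have hxM : traj f x u M ∈ Prod.fst '' Z :=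
          ⟨(traj f x u M, u M), hz M (by omega), rfl⟩
        have e1' := hαlamZ x hx xs ⟨(xs, us), hzs, rfl⟩
        rw [hlam0, sub_zero] at e1'
        have e1'' : |lam x| ≤ αlam D :=
          le_trans e1' (hαlam.2.1.monotoneOn (Set.mem_Ici.mpr (norm_nonneg _))
            hmemD (hXD x hx))
        have e2' := hαlamZ (traj f x u M) hxM xs ⟨(xs, us), hzs, rfl⟩
        rw [hlam0, sub_zero] at e2'
        have e2'' : |lam (traj f x u M)| ≤ αlam D :=
          le_trans e2' (hαlam.2.1.monotoneOn (Set.mem_Ici.mpr (norm_nonneg _))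
            hmemD (hXD _ hxM))
        have a1 := abs_le.mp e1''
        have a2 := abs_le.mp e2''
        linarith [a1.2, a2.1]
      calc ∑ k ∈ Finset.range M, ρ ‖(traj f x u k - xs, u k - us)‖
          ≤ _ := h1
        _ = _ := h2
        _ ≤ C - 1 := by rw [hC]; linarith [hpiece1, hpiece2, hpiece3]
    have hρnn : ∀ k : ℕ, 0 ≤ ρ ‖(traj f x u k - xs, u k - us)‖ := fun k => by
      rw [← hρ0]
      exact hρmono hmem0 (Set.mem_Ici.mpr (norm_nonneg _)) (norm_nonneg _)
    set t2 := T ^ 2 with ht2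
    clear_value t2
    set s1 := ku - kl - t2 with hs1
    clear_value s1
    have hs1a : 1 ≤ s1 ∧ ku = kl + t2 + s1 := by omega
    set ε := σT s1 with hε
    clear_value ε
    have hρε : ρ ε = 3 * C * T / ((s1:ℝ) + 1) := by rw [hε]; exact hσρ s1
    have hρεpos : 0 < ρ ε := by
      rw [hρε]; exact div_pos h3CTpos (by positivity)
    set Bad := (Finset.Icc kl ku).filter
      (fun k => ε < ‖(traj f x u k - xs, u k - us)‖) with hBad
    clear_value Bad
    have hcard1 : ((Bad.erase (N-1)).card : ℝ) * ρ ε ≤ C - 1 := by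
      have ha : ∀ k ∈ Bad.erase (N-1),
          ρ ε ≤ ρ ‖(traj f x u k - xs, u k - us)‖ := by
        intro k hk
        have hkB := Finset.mem_of_mem_erase hk
        rw [hBad] at hkB
        have hk2' := Finset.mem_filter.mp hkB
        have hε0 : 0 ≤ ε := by rw [hε]; exact hσ0 s1
        exact hρmono (Set.mem_Ici.mpr hε0)
          (Set.mem_Ici.mpr (norm_nonneg _)) (le_of_lt hk2'.2)
      have hb := Finset.card_nsmul_le_sum (Bad.erase (N-1)) _ _ ha
      rw [nsmul_eq_mul] at hb
      have hsub : Bad.erase (N-1) ⊆ Finset.range M := by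
        intro k hk
        have h1 := Finset.ne_of_mem_erase hk
        have hkB := Finset.mem_of_mem_erase hk
        rw [hBad] at hkB
        have h2 := Finset.mem_Icc.mp (Finset.mem_filter.mp hkB).1
        rw [Finset.mem_range]; omega
      have hc := Finset.sum_le_sum_of_subset_of_nonneg hsub
        (fun k _ _ => hρnn k)
      calc ((Bad.erase (N-1)).card : ℝ) * ρ ε
          ≤ ∑ k ∈ Bad.erase (N-1), ρ ‖(traj f x u k - xs, u k - us)‖ := hb
        _ ≤ ∑ k ∈ Finset.range M, ρ ‖(traj f x u k - xs, u k - us)‖ := hc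
        _ ≤ C - 1 := key
    set Q := (s1 + t2 + 1) / T with hQ
    clear_value Q
    have hQT_le : Q * T ≤ s1 + t2 + 1 := by
      rw [hQ]; exact Nat.div_mul_le_self _ _
    have hQT_ge : s1 + t2 + 1 < Q * T + T := by
      have h1 : T * Q + (s1 + t2 + 1) % T = s1 + t2 + 1 := by
        rw [hQ]; exact Nat.div_add_mod _ _
      have h2 : (s1 + t2 + 1) % T < T := Nat.mod_lt _ (by omega)
      have h3 : T * Q = Q * T := Nat.mul_comm T Q
      omega
    have hgood : ∃ j, j < Q ∧ ∀ k ∈ Finset.Icc (kl + j*T) (kl + j*T + (T-1)),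
        ‖(traj f x u k - xs, u k - us)‖ ≤ ε := by
      by_contra hcon
      push_neg at hcon
      have hcon' : ∀ j : ℕ, ∃ k : ℕ, j < Q →
          (k ∈ Finset.Icc (kl + j*T) (kl + j*T + (T-1)) ∧
            ε < ‖(traj f x u k - xs, u k - us)‖) := by
        intro j
        by_cases hj : j < Q
        · obtain ⟨k, hk1', hk2'⟩ := hcon j hj
          exact ⟨k, fun _ => ⟨hk1', hk2'⟩⟩
        · exact ⟨0, fun hj' => absurd hj' hj⟩
      choose g hg using hcon'
      have hmaps : ∀ j ∈ Finset.range Q, g j ∈ Bad := by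
        intro j hj
        have hjQ := Finset.mem_range.mp hj
        obtain ⟨hk1', hk2'⟩ := hg j hjQ
        rw [Finset.mem_Icc] at hk1'
        have hjT' : j * T + T ≤ Q * T := by
          have hmm := Nat.mul_le_mul_right T hjQ
          rw [Nat.succ_mul] at hmm
          omega
        rw [hBad, Finset.mem_filter, Finset.mem_Icc]
        exact ⟨⟨by omega, by omega⟩, hk2'⟩
      have hinj : Set.InjOn g ↑(Finset.range Q) := by
        intro a ha b hb hab
        by_contra hne
        have haQ := Finset.mem_range.mp ha
        have hbQ := Finset.mem_range.mp hb
        obtain ⟨ha1, -⟩ := hg a haQ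
        obtain ⟨hb1, -⟩ := hg b hbQ
        rw [Finset.mem_Icc] at ha1 hb1
        rcases Nat.lt_or_ge a b with hlt | hge
        · have hub : a * T + T ≤ b * T := by
            have hmm := Nat.mul_le_mul_right T hlt
            rw [Nat.succ_mul] at hmm
            omega
          omega
        · have hlt' : b < a := by omega
          have hub : b * T + T ≤ a * T := by
            have hmm := Nat.mul_le_mul_right T hlt'
            rw [Nat.succ_mul] at hmm
            omega
          omega
      have hcardQ : Q ≤ Bad.card := by
        have hcc := Finset.card_le_card_of_injOn g hmaps hinj
        rwa [Finset.card_range] at hcc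
      have hcard2 : (Bad.card : ℝ) ≤ ((Bad.erase (N-1)).card : ℝ) + 1 := by
        by_cases hmem : (N-1) ∈ Bad
        · have hcc := Finset.card_erase_add_one hmem
          exact_mod_cast le_of_eq hcc.symm
        · rw [Finset.erase_eq_of_notMem hmem]
          linarith
      have hQr : ((Q:ℝ) - 1) * ρ ε ≤ C - 1 := by
        have hq1 : (Q:ℝ) - 1 ≤ ((Bad.erase (N-1)).card : ℝ) := by
          have hq2 : (Q:ℝ) ≤ (Bad.card : ℝ) := by exact_mod_cast hcardQ
          linarith
        calc ((Q:ℝ) - 1) * ρ ε ≤ ((Bad.erase (N-1)).card : ℝ) * ρ ε :=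
            mul_le_mul_of_nonneg_right hq1 hρεpos.le
          _ ≤ C - 1 := hcard1
      have hs1pos : (0:ℝ) < (s1:ℝ) + 1 := by positivity
      have hρε' : ρ ε * ((s1:ℝ) + 1) = 3 * C * T := by
        rw [hρε]
        exact div_mul_cancel₀ _ hs1pos.ne'
      have h2n : ((Q:ℝ) - 1) * ρ ε * ((s1:ℝ) + 1) ≤ (C - 1) * ((s1:ℝ) + 1) :=
        mul_le_mul_of_nonneg_right hQr hs1pos.le
      have e1' : ((Q:ℝ) - 1) * (3 * C * T) ≤ C * ((s1:ℝ) + 1) := by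
        have h3 : ((Q:ℝ) - 1) * (3 * C * T) = ((Q:ℝ) - 1) * ρ ε * ((s1:ℝ) + 1) := by
          rw [← hρε']; ring
        have h4 : (C - 1) * ((s1:ℝ) + 1) ≤ C * ((s1:ℝ) + 1) := by nlinarith
        rw [h3]
        linarith
      have e2' : C * (3 * (T:ℝ) * ((Q:ℝ) - 1)) ≤ C * ((s1:ℝ) + 1) := by
        have h5 : C * (3 * (T:ℝ) * ((Q:ℝ) - 1)) = ((Q:ℝ) - 1) * (3 * C * T) := by ring
        rw [h5]
        exact e1'
      have e2 : 3 * (T:ℝ) * ((Q:ℝ) - 1) ≤ (s1:ℝ) + 1 := le_of_mul_le_mul_left e2' hCpos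
      have hQT_ge' : (s1:ℝ) + (t2:ℝ) + 2 ≤ (Q:ℝ) * T + T := by
        have hnat : s1 + t2 + 2 ≤ Q * T + T := by omega
        exact_mod_cast hnat
      have ht2' : (t2:ℝ) = (T:ℝ) * T := by
        rw [ht2]
        push_cast
        ring
      have hs1'' : (1:ℝ) ≤ (s1:ℝ) := by exact_mod_cast hs1a.1
      have hT1 : (1:ℝ) ≤ (T:ℝ) := by exact_mod_cast hT
      have hTT : 3 * (T:ℝ) * T - 6 * T + 3 ≥ 0 := by nlinarith [sq_nonneg ((T:ℝ) - 1)]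
      linarith
    obtain ⟨j, hjQ, hjgood⟩ := hgood
    have hjT : j * T + T ≤ Q * T := by
      have := Nat.mul_le_mul_right T hjQ
      rw [Nat.succ_mul] at this
      omega
    refine ⟨kl + j*T + (T-1), ?_, ?_⟩
    · rw [Finset.mem_Icc]
      omega
    · intro k hk
      rw [Finset.mem_Icc] at hk
      have hkmem : k ∈ Finset.Icc (kl + j*T) (kl + j*T + (T-1)) := by
        rw [Finset.mem_Icc]; omega
      have hkku : k < N := by omega
      have h1 := hjgood k hkmem
      refine ⟨h1, ?_⟩
      have h4 := hhL (traj f x u k, u k) (hz k hkku) (xs, us) hzs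
      dsimp only at h4
      calc ‖h (traj f x u k) (u k) - h xs us‖
          ≤ Lh * ‖(traj f x u k - xs, u k - us)‖ := h4
        _ ≤ Lh * ε := mul_le_mul_of_nonneg_left h1 hLh.le

end EMPC
end
end

section
/- (Remark 2 bound.) Let p≥1, T≥2, λ̄∈ℝᵖ with λ̄≥0 componentwise, h_s∈ℝᵖ with λ̄ᵀh_s=0, and H^s:=[h_s,…,h_s]∈ℝ^{p×(T−1)}. Let H∈ℝ^{p×(T−1)} with columns H_1,…,H_{T−1} and let y_0,…,y_{T−2}∈ℝᵖ satisfy the overlapping transient average constraints Σ_{i=j}^{T−1} H_i + Σ_{k=0}^{j−1} y_k ≤ 0 componentwise for all j∈{1,…,T−1}. Then λ̄ᵀ Σ_{j=1}^{T−1} Σ_{k=0}^{j−1} y_k ≤ (T−1)²·‖λ̄‖·‖H−H^s‖₁, where ‖λ̄‖ is the Euclidean norm and ‖H−H^s‖₁ := max_{j∈{1,…,T−1}} ‖H_j−h_s‖₁ with ‖·‖₁ the ℓ¹-norm on ℝᵖ. -/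
open Finset Filter
open scoped Classical

noncomputable section

namespace EMPC

variable {n m p : ℕ}

lemma real_ciSup_of_empty {ι : Sort*} [IsEmpty ι] (f : ι → ℝ) : (⨆ i, f i) = 0 := by
  rw [iSup_of_empty']; exact Real.sSup_empty

lemma biSup_fin_bdd (s : Finset ℕ) (g : ℕ → ℝ) :
    BddAbove (Set.range fun k => ⨆ _ : k ∈ s, g k) := by
  refine ⟨∑ k ∈ s, |g k|, ?_⟩
  rintro x ⟨k, rfl⟩
  dsimp only
  by_cases hk : k ∈ s
  · rw [ciSup_pos hk]
    calc g k ≤ |g k| := le_abs_self _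
      _ ≤ ∑ k ∈ s, |g k| := Finset.single_le_sum (f := fun k => |g k|) (fun i _ => abs_nonneg (g i)) hk
  · rw [show (⨆ _ : k ∈ s, g k) = 0 from by
      haveI : IsEmpty (k ∈ s) := ⟨hk⟩; exact real_ciSup_of_empty _]
    exact Finset.sum_nonneg fun i _ => abs_nonneg _

lemma le_biSup_fin (s : Finset ℕ) (g : ℕ → ℝ) {l : ℕ} (hl : l ∈ s) :
    g l ≤ ⨆ k, ⨆ _ : k ∈ s, g k := by
  have := le_ciSup (biSup_fin_bdd s g) l
  rwa [ciSup_pos hl] at this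

lemma coord_le_norm (v : Vec p) (i : Fin p) : |v i| ≤ ‖v‖ := by
  rw [EuclideanSpace.norm_eq]
  have h1 : |v i| = Real.sqrt (‖v i‖ ^ 2) := by
    rw [Real.sqrt_sq_eq_abs]; simp
  rw [h1]
  apply Real.sqrt_le_sqrt
  exact Finset.single_le_sum (f := fun j => ‖v j‖ ^ 2) (fun j _ => sq_nonneg _) (Finset.mem_univ i)

theorem future_output_bound (p T : ℕ) (hp : 1 ≤ p) (hT : 2 ≤ T)
    (lb : Vec p) (hlb : ∀ i, 0 ≤ lb i) (hs : Vec p)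
    (hlbhs : (∑ i, lb i * hs i) = 0)
    (H : ℕ → Vec p) (y : ℕ → Vec p)
    (hcon : ∀ j ∈ Finset.Icc 1 (T - 1), ∀ i : Fin p,
      (∑ l ∈ Finset.Icc j (T - 1), H l i) + (∑ k ∈ Finset.range j, y k i) ≤ 0) :
    (∑ j ∈ Finset.Icc 1 (T - 1), ∑ k ∈ Finset.range j, ∑ i, lb i * y k i) ≤
      ((T : ℝ) - 1) ^ 2 * ‖lb‖ * norm1H T (fun k => H k - hs) := by
  set N1 : ℝ := norm1H T (fun k => H k - hs) with hN1
  -- nonnegativity of N1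
  have hTm1 : 1 ≤ T - 1 := by omega
  have hN1nn : 0 ≤ N1 := by
    have h0 : (0 : ℕ) ∉ Finset.Icc 1 (T - 1) := by simp
    have := le_ciSup (biSup_fin_bdd (Finset.Icc 1 (T - 1))
      (fun k => l1 ((fun k => H k - hs) k))) 0
    rw [show (⨆ _ : (0:ℕ) ∈ Finset.Icc 1 (T-1), l1 (H 0 - hs)) = 0 from by
      haveI : IsEmpty ((0:ℕ) ∈ Finset.Icc 1 (T-1)) := ⟨h0⟩
      exact real_ciSup_of_empty _] at this
    exact this
  have hl1le : ∀ l ∈ Finset.Icc 1 (T - 1), l1 (H l - hs) ≤ N1 := fun l hl =>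
    le_biSup_fin (Finset.Icc 1 (T - 1)) (fun k => l1 (H k - hs)) hl
  have hnn : 0 ≤ ‖lb‖ * N1 := mul_nonneg (norm_nonneg _) hN1nn
  -- per-j bound
  have hj : ∀ j ∈ Finset.Icc 1 (T - 1),
      (∑ k ∈ Finset.range j, ∑ i, lb i * y k i) ≤ ((T : ℝ) - 1) * (‖lb‖ * N1) := by
    intro j hj
    have step1 : (∑ k ∈ Finset.range j, ∑ i, lb i * y k i)
        = ∑ i, lb i * ∑ k ∈ Finset.range j, y k i := by
      rw [Finset.sum_comm]
      exact Finset.sum_congr rfl fun i _ => (Finset.mul_sum _ _ _).symm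
    have step2 : (∑ i, lb i * ∑ k ∈ Finset.range j, y k i)
        ≤ ∑ i, lb i * (-(∑ l ∈ Finset.Icc j (T - 1), H l i)) := by
      apply Finset.sum_le_sum
      intro i _
      apply mul_le_mul_of_nonneg_left _ (hlb i)
      have := hcon j hj i
      linarith
    have key : ∀ l, (∑ i, lb i * H l i) = ∑ i, lb i * (H l - hs) i := by
      intro l
      have h1 : (∑ i, lb i * (H l - hs) i)
          = ∑ i, (lb i * H l i - lb i * hs i) := by
        apply Finset.sum_congr rfl
        intro i _
        have : (H l - hs) i = H l i - hs i := rfl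
        rw [this]; ring
      rw [h1, Finset.sum_sub_distrib, hlbhs, sub_zero]
    have step3 : (∑ i, lb i * (-(∑ l ∈ Finset.Icc j (T - 1), H l i)))
        = ∑ l ∈ Finset.Icc j (T - 1), (- ∑ i, lb i * (H l - hs) i) := by
      calc (∑ i, lb i * (-(∑ l ∈ Finset.Icc j (T - 1), H l i)))
          = ∑ i, ∑ l ∈ Finset.Icc j (T - 1), (-(lb i * H l i)) := by
            apply Finset.sum_congr rfl
            intro i _
            rw [mul_neg, Finset.mul_sum, Finset.sum_neg_distrib]
        _ = ∑ l ∈ Finset.Icc j (T - 1), ∑ i, (-(lb i * H l i)) :=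
            Finset.sum_comm
        _ = ∑ l ∈ Finset.Icc j (T - 1), (- ∑ i, lb i * (H l - hs) i) := by
            apply Finset.sum_congr rfl
            intro l _
            rw [Finset.sum_neg_distrib, key]
    have step4 : ∀ l ∈ Finset.Icc j (T - 1),
        (- ∑ i, lb i * (H l - hs) i) ≤ ‖lb‖ * N1 := by
      intro l hl
      have hl' : l ∈ Finset.Icc 1 (T - 1) := by
        simp only [Finset.mem_Icc] at *; omega
      calc (- ∑ i, lb i * (H l - hs) i) ≤ |∑ i, lb i * (H l - hs) i| :=
            neg_le_abs _
        _ ≤ ∑ i, |lb i * (H l - hs) i| := Finset.abs_sum_le_sum_abs _ _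
        _ ≤ ∑ i, ‖lb‖ * |(H l - hs) i| := by
            apply Finset.sum_le_sum
            intro i _
            rw [abs_mul]
            apply mul_le_mul_of_nonneg_right _ (abs_nonneg _)
            exact coord_le_norm lb i
        _ = ‖lb‖ * l1 (H l - hs) := by rw [l1, Finset.mul_sum]
        _ ≤ ‖lb‖ * N1 := mul_le_mul_of_nonneg_left (hl1le l hl') (norm_nonneg _)
    have hcard : ((Finset.Icc j (T - 1)).card : ℝ) ≤ (T : ℝ) - 1 := by
      rw [Nat.card_Icc]
      simp only [Finset.mem_Icc] at hj
      have h1 : T - 1 + 1 - j ≤ T - 1 := by omega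
      calc ((T - 1 + 1 - j : ℕ) : ℝ) ≤ ((T - 1 : ℕ) : ℝ) := by exact_mod_cast h1
        _ = (T : ℝ) - 1 := by
          rw [Nat.cast_sub (by omega)]; simp
    calc (∑ k ∈ Finset.range j, ∑ i, lb i * y k i)
        ≤ ∑ l ∈ Finset.Icc j (T - 1), (- ∑ i, lb i * (H l - hs) i) := by
          rw [step1, ← step3]; exact step2
      _ ≤ ∑ _l ∈ Finset.Icc j (T - 1), ‖lb‖ * N1 := Finset.sum_le_sum step4
      _ = ((Finset.Icc j (T - 1)).card : ℝ) * (‖lb‖ * N1) := by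
          rw [Finset.sum_const, nsmul_eq_mul]
      _ ≤ ((T : ℝ) - 1) * (‖lb‖ * N1) := mul_le_mul_of_nonneg_right hcard hnn
  calc (∑ j ∈ Finset.Icc 1 (T - 1), ∑ k ∈ Finset.range j, ∑ i, lb i * y k i)
      ≤ ∑ _j ∈ Finset.Icc 1 (T - 1), ((T : ℝ) - 1) * (‖lb‖ * N1) :=
        Finset.sum_le_sum hj
    _ = ((Finset.Icc 1 (T - 1)).card : ℝ) * (((T : ℝ) - 1) * (‖lb‖ * N1)) := by
        rw [Finset.sum_const, nsmul_eq_mul]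
    _ = ((T : ℝ) - 1) ^ 2 * ‖lb‖ * N1 := by
        rw [Nat.card_Icc]
        have : ((T - 1 + 1 - 1 : ℕ) : ℝ) = (T : ℝ) - 1 := by
          rw [show T - 1 + 1 - 1 = T - 1 from by omega, Nat.cast_sub (by omega)]
          simp
        rw [this]; ring

end EMPC
end
end
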